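/- Let m be an even integer with m ≥ 6 and let d > 0 be a real number. Define the real m×m circulant matrix B by B_{j,k} = 6 + d if j = k; B_{j,k} = −4 if j ≡ k − 1 (mod m) or j ≡ k + 1 (mod m); B_{j,k} = 1 if j ≡ k − 2 (mod m) or j ≡ k + 2 (mod m); and B_{j,k} = 0 otherwise. Then the condition number of B equals (16 + d)/d. -/

import Mathlib

open Matrix
open Fin.NatCast Fin.CommRing

/-- The Euclidean norm of a vector in `ℝᵏ`. -/
noncomputable def euclNorm {k : ℕ} (v : Fin k → ℝ) : ℝ :=
  Real.sqrt (∑ i, v i ^ 2)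

/-- The greatest singular value of a real `m × k` matrix `M` (`m ≤ k`):
`sup {‖Mᵀ y‖ : y ∈ ℝᵐ, ‖y‖ = 1}`. -/
noncomputable def sigmaMax {m k : ℕ} (M : Matrix (Fin m) (Fin k) ℝ) : ℝ :=
  sSup {x | ∃ y : Fin m → ℝ, euclNorm y = 1 ∧ x = euclNorm (Mᵀ.mulVec y)}

/-- The least (`m`-th greatest) singular value of a real `m × k` matrix `M`
(`m ≤ k`): `inf {‖Mᵀ y‖ : y ∈ ℝᵐ, ‖y‖ = 1}`. -/
noncomputable def sigmaMin {m k : ℕ} (M : Matrix (Fin m) (Fin k) ℝ) : ℝ :=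
  sInf {x | ∃ y : Fin m → ℝ, euclNorm y = 1 ∧ x = euclNorm (Mᵀ.mulVec y)}

/-- The condition number of a real `m × k` matrix (`m ≤ k`): the ratio of its
greatest singular value to its least singular value. -/
noncomputable def condNum {m k : ℕ} (M : Matrix (Fin m) (Fin k) ℝ) : ℝ :=
  sigmaMax M / sigmaMin M

/-- The `m × m` circulant matrix of the paper: `6 + d` on the diagonal, `-4` on
the (cyclic) first off-diagonals (`j ≡ k ± 1 (mod m)`), `1` on the (cyclic)
second off-diagonals (`j ≡ k ± 2 (mod m)`), and `0` elsewhere. -/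
noncomputable def circB (m : ℕ) (d : ℝ) : Matrix (Fin m) (Fin m) ℝ :=
  Matrix.of fun j k =>
    if (j : ℕ) = (k : ℕ) then 6 + d
    else if ((j : ℕ) + 1) % m = (k : ℕ) ∨ ((k : ℕ) + 1) % m = (j : ℕ) then -4
    else if ((j : ℕ) + 2) % m = (k : ℕ) ∨ ((k : ℕ) + 2) % m = (j : ℕ) then 1
    else 0

lemma modcase {a m : ℕ} (h : a < 2 * m) : a % m = a ∨ (m ≤ a ∧ a % m = a - m) := by
  rcases lt_or_ge a m with h1 | h1
  · exact Or.inl (Nat.mod_eq_of_lt h1)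
  · exact Or.inr ⟨h1, by rw [Nat.mod_eq_sub_mod h1, Nat.mod_eq_of_lt (by omega)]⟩
lemma fin_eq_add {m : ℕ} [NeZero m] (j k : Fin m) (c : ℕ) (hcm : c < m) :
    (k = j + (c : Fin m)) ↔ ((j : ℕ) + c) % m = (k : ℕ) := by
  rw [Fin.ext_iff, Fin.val_add, Fin.coe_natCast_eq_mod, Nat.mod_eq_of_lt hcm, eq_comm]
lemma fin_eq_sub {m : ℕ} [NeZero m] (j k : Fin m) (c : ℕ) (hcm : c < m) :
    (k = j - (c : Fin m)) ↔ ((k : ℕ) + c) % m = (j : ℕ) := by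
  rw [eq_sub_iff_add_eq, Fin.ext_iff, Fin.val_add, Fin.coe_natCast_eq_mod, Nat.mod_eq_of_lt hcm]
set_option maxHeartbeats 1600000 in
lemma ind_eq (d : ℝ) (P0 P1 P2 P3 P4 : Prop)
    [Decidable P0] [Decidable P1] [Decidable P2] [Decidable P3] [Decidable P4]
    (h01 : ¬(P0 ∧ P1)) (h02 : ¬(P0 ∧ P2)) (h03 : ¬(P0 ∧ P3)) (h04 : ¬(P0 ∧ P4))
    (h12 : ¬(P1 ∧ P2)) (h13 : ¬(P1 ∧ P3)) (h14 : ¬(P1 ∧ P4))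
    (h23 : ¬(P2 ∧ P3)) (h24 : ¬(P2 ∧ P4)) (h34 : ¬(P3 ∧ P4)) :
    (if P0 then 6 + d else if P1 ∨ P2 then -4 else if P3 ∨ P4 then (1 : ℝ) else 0)
      = (6 + d) * (if P0 then 1 else 0) + (-4) * (if P1 then 1 else 0)
        + (-4) * (if P2 then 1 else 0) + (if P3 then 1 else 0) + (if P4 then 1 else 0) := by
  by_cases hP0 : P0
  · have n1 : ¬P1 := fun h => h01 ⟨hP0, h⟩
    have n2 : ¬P2 := fun h => h02 ⟨hP0, h⟩
    have n3 : ¬P3 := fun h => h03 ⟨hP0, h⟩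
    have n4 : ¬P4 := fun h => h04 ⟨hP0, h⟩
    simp [hP0, n1, n2, n3, n4]
  by_cases hP1 : P1
  · have n2 : ¬P2 := fun h => h12 ⟨hP1, h⟩
    have n3 : ¬P3 := fun h => h13 ⟨hP1, h⟩
    have n4 : ¬P4 := fun h => h14 ⟨hP1, h⟩
    simp [hP0, hP1, n2, n3, n4]
  by_cases hP2 : P2
  · have n3 : ¬P3 := fun h => h23 ⟨hP2, h⟩
    have n4 : ¬P4 := fun h => h24 ⟨hP2, h⟩
    simp [hP0, hP1, hP2, n3, n4]
  by_cases hP3 : P3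
  · have n4 : ¬P4 := fun h => h34 ⟨hP3, h⟩
    simp [hP0, hP1, hP2, hP3, n4]
  by_cases hP4 : P4 <;> simp [hP0, hP1, hP2, hP3, hP4]
lemma circB_apply {m : ℕ} [NeZero m] (hm : 6 ≤ m) (d : ℝ) (j k : Fin m) :
    circB m d j k =
      (6 + d) * (if k = j then 1 else 0) + (-4) * (if k = j + 1 then 1 else 0)
        + (-4) * (if k = j - 1 then 1 else 0) + (if k = j + 2 then 1 else 0)
        + (if k = j - 2 then 1 else 0) := by
  have ha := j.isLt
  have hb := k.isLt
  have e1 : (1 : Fin m) = ((1 : ℕ) : Fin m) := by simp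
  have e2 : (2 : Fin m) = ((2 : ℕ) : Fin m) := by simp
  rw [e1, e2]
  have e0 : (k = j) ↔ ((j : ℕ) = (k : ℕ)) := by rw [Fin.ext_iff]; exact eq_comm
  simp only [e0, fin_eq_add j k 1 (by omega), fin_eq_sub j k 1 (by omega),
    fin_eq_add j k 2 (by omega), fin_eq_sub j k 2 (by omega)]
  simp only [circB, Matrix.of_apply]
  have h1 := modcase (show (j : ℕ) + 1 < 2 * m by omega)
  have h2 := modcase (show (k : ℕ) + 1 < 2 * m by omega)
  have h3 := modcase (show (j : ℕ) + 2 < 2 * m by omega)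
  have h4 := modcase (show (k : ℕ) + 2 < 2 * m by omega)
  set p1 := ((j : ℕ) + 1) % m with hp1
  set p2 := ((k : ℕ) + 1) % m with hp2
  set p3 := ((j : ℕ) + 2) % m with hp3
  set p4 := ((k : ℕ) + 2) % m with hp4
  exact ind_eq d _ _ _ _ _ (by omega) (by omega) (by omega) (by omega) (by omega)
    (by omega) (by omega) (by omega) (by omega) (by omega)
lemma circB_mulVec {m : ℕ} [NeZero m] (hm : 6 ≤ m) (d : ℝ) (y : Fin m → ℝ) (j : Fin m) :
    (circB m d).mulVec y j
      = (6 + d) * y j - 4 * y (j + 1) - 4 * y (j - 1) + y (j + 2) + y (j - 2) := by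
  unfold mulVec dotProduct
  simp only [circB_apply hm d j]
  simp only [add_mul, ite_mul, one_mul, zero_mul, mul_ite, mul_zero, mul_one, neg_mul,
    Finset.sum_add_distrib, Finset.sum_ite_eq', Finset.mem_univ, if_true, Finset.sum_neg_distrib]
  ring
def Lop {m : ℕ} [NeZero m] (y : Fin m → ℝ) : Fin m → ℝ :=
  fun j => 2 * y j - y (j + 1) - y (j - 1)
lemma circB_mulVec_L {m : ℕ} [NeZero m] (hm : 6 ≤ m) (d : ℝ) (y : Fin m → ℝ) :
    (circB m d).mulVec y = fun j => d * y j + Lop (Lop y) j := by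
  funext j
  rw [circB_mulVec hm]
  simp only [Lop]
  have e1 : j + 1 + 1 = j + 2 := by ring
  have e2 : j + 1 - 1 = j := by ring
  have e3 : j - 1 + 1 = j := by ring
  have e4 : j - 1 - 1 = j - 2 := by ring
  rw [e1, e2, e3, e4]
  ring

-- Euclidean norm toolkit
lemma euclNorm_eq_norm {k : ℕ} (v : Fin k → ℝ) :
    euclNorm v = ‖(WithLp.equiv 2 (Fin k → ℝ)).symm v‖ := by
  rw [EuclideanSpace.norm_eq]
  simp [euclNorm, sq_abs]
lemma euclNorm_nonneg {k : ℕ} (v : Fin k → ℝ) : 0 ≤ euclNorm v := Real.sqrt_nonneg _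
lemma euclNorm_add_le {k : ℕ} (v w : Fin k → ℝ) :
    euclNorm (fun i => v i + w i) ≤ euclNorm v + euclNorm w := by
  rw [euclNorm_eq_norm, euclNorm_eq_norm, euclNorm_eq_norm]
  exact norm_add_le ((WithLp.equiv 2 (Fin k → ℝ)).symm v) ((WithLp.equiv 2 (Fin k → ℝ)).symm w)
lemma euclNorm_sub_le {k : ℕ} (v w : Fin k → ℝ) :
    euclNorm (fun i => v i - w i) ≤ euclNorm v + euclNorm w := by
  rw [euclNorm_eq_norm, euclNorm_eq_norm, euclNorm_eq_norm]
  exact norm_sub_le ((WithLp.equiv 2 (Fin k → ℝ)).symm v) ((WithLp.equiv 2 (Fin k → ℝ)).symm w)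
lemma euclNorm_smul {k : ℕ} (c : ℝ) (v : Fin k → ℝ) :
    euclNorm (fun i => c * v i) = |c| * euclNorm v := by
  rw [euclNorm_eq_norm, euclNorm_eq_norm]
  have : (WithLp.equiv 2 (Fin k → ℝ)).symm (fun i => c * v i)
      = c • (WithLp.equiv 2 (Fin k → ℝ)).symm v := rfl
  rw [this, norm_smul, Real.norm_eq_abs]
lemma inner_le_euclNorm_mul {k : ℕ} (v w : Fin k → ℝ) :
    ∑ i, v i * w i ≤ euclNorm v * euclNorm w := by
  rw [euclNorm_eq_norm, euclNorm_eq_norm]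
  have h := real_inner_le_norm ((WithLp.equiv 2 (Fin k → ℝ)).symm v)
      ((WithLp.equiv 2 (Fin k → ℝ)).symm w)
  simpa [PiLp.inner_apply, mul_comm] using h
lemma euclNorm_comp_equiv {k : ℕ} (v : Fin k → ℝ) (e : Fin k ≃ Fin k) :
    euclNorm (fun i => v (e i)) = euclNorm v := by
  unfold euclNorm
  congr 1
  exact Equiv.sum_comp e (fun i => v i ^ 2)
lemma euclNorm_shift_add {m : ℕ} [NeZero m] (y : Fin m → ℝ) (c : Fin m) :
    euclNorm (fun j => y (j + c)) = euclNorm y :=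
  euclNorm_comp_equiv y (Equiv.addRight c)
lemma euclNorm_shift_sub {m : ℕ} [NeZero m] (y : Fin m → ℝ) (c : Fin m) :
    euclNorm (fun j => y (j - c)) = euclNorm y :=
  euclNorm_comp_equiv y (Equiv.subRight c)
lemma euclNorm_Lop_le {m : ℕ} [NeZero m] (y : Fin m → ℝ) :
    euclNorm (Lop y) ≤ 4 * euclNorm y := by
  have h1 : euclNorm (Lop y) ≤ euclNorm (fun j => 2 * y j - y (j + 1)) + euclNorm (fun j => y (j - 1)) :=
    euclNorm_sub_le _ _
  have h2 : euclNorm (fun j => 2 * y j - y (j + 1)) ≤ euclNorm (fun j => 2 * y j) + euclNorm (fun j => y (j + 1)) :=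
    euclNorm_sub_le _ _
  have h3 : euclNorm (fun j : Fin m => 2 * y j) = 2 * euclNorm y := by
    rw [euclNorm_smul]; norm_num
  have h4 := euclNorm_shift_add y 1
  have h5 := euclNorm_shift_sub y 1
  calc euclNorm (Lop y) ≤ _ := h1
    _ ≤ euclNorm (fun j : Fin m => 2 * y j) + euclNorm (fun j => y (j + 1)) + euclNorm (fun j => y (j - 1)) := by linarith
    _ = 4 * euclNorm y := by rw [h3, h4, h5]; ring
lemma Lop_inner {m : ℕ} [NeZero m] (z y : Fin m → ℝ) :
    ∑ j, Lop z j * y j = ∑ j, z j * Lop y j := by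
  have h1 : ∑ j, z (j + 1) * y j = ∑ j, z j * y (j - 1) := by
    rw [← Equiv.sum_comp (Equiv.addRight (1 : Fin m)) (fun j => z j * y (j - 1))]
    refine Finset.sum_congr rfl fun i _ => ?_
    simp [Equiv.addRight, add_sub_cancel_right]
  have h2 : ∑ j, z (j - 1) * y j = ∑ j, z j * y (j + 1) := by
    rw [← Equiv.sum_comp (Equiv.subRight (1 : Fin m)) (fun j => z j * y (j + 1))]
    refine Finset.sum_congr rfl fun i _ => ?_
    simp [Equiv.subRight, sub_add_cancel]
  have e1 : ∑ j, Lop z j * y j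
      = (∑ j, 2 * (z j * y j)) - (∑ j, z (j + 1) * y j) - ∑ j, z (j - 1) * y j := by
    simp [Lop, sub_mul, Finset.sum_sub_distrib, mul_assoc]
  have e2 : ∑ j, z j * Lop y j
      = (∑ j, 2 * (z j * y j)) - (∑ j, z j * y (j + 1)) - ∑ j, z j * y (j - 1) := by
    simp only [Lop, mul_sub, Finset.sum_sub_distrib]
    congr 1
    congr 1
    exact Finset.sum_congr rfl fun i _ => by ring
  rw [e1, e2, h1, h2]
  ring
lemma neg_one_pow_mod {m : ℕ} (hme : Even m) (n : ℕ) : ((-1 : ℝ)) ^ (n % m) = (-1) ^ n := by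
  conv_rhs => rw [← Nat.div_add_mod n m]
  rw [pow_add, pow_mul, hme.neg_one_pow, one_pow, one_mul]
lemma val_add_one' {m : ℕ} [NeZero m] (hm : 6 ≤ m) (j : Fin m) :
    ((j + 1 : Fin m) : ℕ) = ((j : ℕ) + 1) % m := by
  rw [Fin.val_add, Fin.val_one', Nat.mod_eq_of_lt (show 1 < m by omega)]
section Vectors
variable {m : ℕ} [NeZero m] (hm : 6 ≤ m)

/-- the constant unit vector -/
noncomputable def y₀ (m : ℕ) : Fin m → ℝ := fun _ => (Real.sqrt m)⁻¹

/-- the alternating unit vector -/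
noncomputable def y₁ (m : ℕ) : Fin m → ℝ := fun j => (-1) ^ (j : ℕ) * (Real.sqrt m)⁻¹
lemma sqrtm_pos (hm : 6 ≤ m) : 0 < Real.sqrt m := Real.sqrt_pos.mpr (by positivity)
lemma sum_sq_const (c : ℝ) : ∑ _j : Fin m, c ^ 2 = m * c ^ 2 := by
  rw [Finset.sum_const, Finset.card_univ, Fintype.card_fin, nsmul_eq_mul]
lemma y0_norm (hm : 6 ≤ m) : euclNorm (y₀ m) = 1 := by
  have h0 : (0:ℝ) < m := by positivity
  unfold euclNorm y₀
  rw [sum_sq_const]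
  rw [inv_pow, Real.sq_sqrt h0.le, mul_inv_cancel₀ h0.ne']
  exact Real.sqrt_one
lemma y1_neg (hm : 6 ≤ m) (hme : Even m) (j : Fin m) : y₁ m (j + 1) = -y₁ m j := by
  unfold y₁
  rw [val_add_one' hm, neg_one_pow_mod hme, pow_succ]
  ring
lemma y1_norm (hm : 6 ≤ m) : euclNorm (y₁ m) = 1 := by
  have h0 : (0:ℝ) < m := by positivity
  unfold euclNorm y₁
  have : ∀ j : Fin m, ((-1:ℝ) ^ (j : ℕ) * (Real.sqrt m)⁻¹) ^ 2 = ((Real.sqrt m)⁻¹) ^ 2 := by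
    intro j
    rw [mul_pow, ← pow_mul, mul_comm (j:ℕ) 2, pow_mul]
    norm_num
  rw [Finset.sum_congr rfl fun j _ => this j, sum_sq_const, inv_pow, Real.sq_sqrt h0.le,
    mul_inv_cancel₀ h0.ne']
  exact Real.sqrt_one
end Vectors
lemma y1_neg_sub {m : ℕ} [NeZero m] (hm : 6 ≤ m) (hme : Even m) (j : Fin m) :
    y₁ m (j - 1) = -y₁ m j := by
  have h := y1_neg hm hme (j - 1)
  rw [sub_add_cancel] at h
  linarith
lemma Lop_y0 {m : ℕ} [NeZero m] : Lop (y₀ m) = fun _ => 0 := by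
  funext j; simp [Lop, y₀]; ring
lemma Lop_y1 {m : ℕ} [NeZero m] (hm : 6 ≤ m) (hme : Even m) :
    Lop (y₁ m) = fun j => 4 * y₁ m j := by
  funext j
  rw [Lop, y1_neg hm hme, y1_neg_sub hm hme]
  ring
lemma mulVec_y0 {m : ℕ} [NeZero m] (hm : 6 ≤ m) (d : ℝ) :
    (circB m d).mulVec (y₀ m) = fun j => d * y₀ m j := by
  rw [circB_mulVec_L hm, Lop_y0]
  funext j
  have : Lop (fun _ : Fin m => (0:ℝ)) = fun _ => 0 := by funext i; simp [Lop]
  rw [this]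
  ring
lemma mulVec_y1 {m : ℕ} [NeZero m] (hm : 6 ≤ m) (hme : Even m) (d : ℝ) :
    (circB m d).mulVec (y₁ m) = fun j => (d + 16) * y₁ m j := by
  rw [circB_mulVec_L hm, Lop_y1 hm hme]
  funext j
  have : Lop (fun i => 4 * y₁ m i) j = 4 * Lop (y₁ m) j := by simp [Lop]; ring
  rw [this, Lop_y1 hm hme]
  ring
lemma circB_transpose (m : ℕ) (d : ℝ) : (circB m d)ᵀ = circB m d := by
  ext j k
  simp only [transpose_apply, circB, Matrix.of_apply]
  exact if_congr eq_comm rfl (if_congr or_comm rfl (if_congr or_comm rfl rfl))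

/-- For even `m ≥ 6` and `d > 0`, the condition number of the
circulant matrix `B` equals `(16 + d) / d`. -/
theorem stmt_18 (m : ℕ) (hm : 6 ≤ m) (hme : Even m) (d : ℝ) (hd : 0 < d) :
    condNum (circB m d) = (16 + d) / d := by
  haveI : NeZero m := ⟨by omega⟩
  have hBt : (circB m d)ᵀ = circB m d := circB_transpose m d
  set B := circB m d with hB
  set W : Set ℝ := {x | ∃ y : Fin m → ℝ, euclNorm y = 1 ∧ x = euclNorm (B.mulVec y)} with hW
  -- facts about unit vectors
  have unit_sum : ∀ y : Fin m → ℝ, euclNorm y = 1 → ∑ j, y j ^ 2 = 1 := by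
    intro y hy
    have h0 : 0 ≤ ∑ j, y j ^ 2 := Finset.sum_nonneg fun j _ => sq_nonneg _
    have := congrArg (· ^ 2) hy
    simpa [euclNorm, Real.sq_sqrt h0] using this
  -- upper bound
  have upper : ∀ x ∈ W, x ≤ 16 + d := by
    rintro x ⟨y, hy, rfl⟩
    rw [circB_mulVec_L hm]
    have h1 : euclNorm (fun j => d * y j + Lop (Lop y) j)
        ≤ euclNorm (fun j => d * y j) + euclNorm (Lop (Lop y)) := euclNorm_add_le _ _
    have h2 : euclNorm (fun j => d * y j) = d := by
      rw [euclNorm_smul, hy, abs_of_pos hd, mul_one]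
    have h3 : euclNorm (Lop (Lop y)) ≤ 4 * euclNorm (Lop y) := euclNorm_Lop_le _
    have h4 : euclNorm (Lop y) ≤ 4 * euclNorm y := euclNorm_Lop_le _
    rw [hy] at h4
    linarith
  -- lower bound
  have lower : ∀ x ∈ W, d ≤ x := by
    rintro x ⟨y, hy, rfl⟩
    have hsum := unit_sum y hy
    have key : ∑ j, (B.mulVec y) j * y j = d + ∑ j, Lop y j ^ 2 := by
      rw [circB_mulVec_L hm]
      have expand : ∑ j, (d * y j + Lop (Lop y) j) * y j
          = d * (∑ j, y j ^ 2) + ∑ j, Lop (Lop y) j * y j := by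
        rw [Finset.mul_sum, ← Finset.sum_add_distrib]
        exact Finset.sum_congr rfl fun j _ => by ring
      rw [expand, hsum, Lop_inner (Lop y) y, mul_one]
      congr 1
      exact Finset.sum_congr rfl fun j _ => (sq (Lop y j)).symm ▸ (sq (Lop y j)) ▸ rfl
    have cs : ∑ j, (B.mulVec y) j * y j ≤ euclNorm (B.mulVec y) * euclNorm y :=
      inner_le_euclNorm_mul _ _
    rw [hy, mul_one] at cs
    have hnn : 0 ≤ ∑ j, Lop y j ^ 2 := Finset.sum_nonneg fun j _ => sq_nonneg _
    linarith
  -- memberships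
  have memMax : (16 + d) ∈ W := by
    refine ⟨y₁ m, y1_norm hm, ?_⟩
    rw [mulVec_y1 hm hme d, euclNorm_smul, y1_norm hm, abs_of_pos (by linarith), mul_one]
    ring
  have memMin : d ∈ W := by
    refine ⟨y₀ m, y0_norm hm, ?_⟩
    rw [mulVec_y0 hm d, euclNorm_smul, y0_norm hm, abs_of_pos hd, mul_one]
  have hSup : sSup W = 16 + d :=
    le_antisymm (csSup_le ⟨16 + d, memMax⟩ upper) (le_csSup ⟨16 + d, upper⟩ memMax)
  have hInf : sInf W = d :=
    le_antisymm (csInf_le ⟨d, lower⟩ memMin) (le_csInf ⟨d, memMin⟩ lower)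
  unfold condNum sigmaMax sigmaMin
  rw [hBt]
  show sSup W / sInf W = (16 + d) / d
  rw [hSup, hInf]
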